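/- Let Ω'' be the family of all subsets of [0,1] × [0,∞) of the form A ∪ ({1} × [0,∞)) where A ⊆ [0,1] × [0,∞) is bounded and closed, equipped with the Hausdorff metric (defined via the ℓ∞ norm on ℝ²). Let Ω' ⊆ Ω'' consist of those sets whose vertical cut at each t ∈ [0,1) is a nonempty closed interval and whose cut at 0 contains the point 1. Then Ω' is closed in Ω''. -/

import Mathlib

set_option autoImplicit false

open Set

/-- The vertical cut of a subset of the plane at abscissa `t`. -/
def verticalCut (S : Set (ℝ × ℝ)) (t : ℝ) : Set ℝ := {a : ℝ | (t, a) ∈ S}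

/-- Membership in `Ω''`: sets of the form `A ∪ ({1} × [0,∞))` with
`A ⊆ [0,1] × [0,∞)` bounded and closed. -/
def MemOmegaPP (S : Set (ℝ × ℝ)) : Prop :=
  ∃ A : Set (ℝ × ℝ), IsClosed A ∧ Bornology.IsBounded A ∧
    A ⊆ Icc (0 : ℝ) 1 ×ˢ Ici (0 : ℝ) ∧ S = A ∪ ({(1 : ℝ)} ×ˢ Ici (0 : ℝ))

/-- Membership in `Ω'`: members of `Ω''` all of whose vertical cuts at `t ∈ [0,1)` are
nonempty closed intervals, and whose cut at `0` contains `1`. -/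
def MemOmegaP (S : Set (ℝ × ℝ)) : Prop :=
  MemOmegaPP S ∧
    (∀ t ∈ Ico (0 : ℝ) 1, ∃ a b : ℝ, a ≤ b ∧ verticalCut S t = Icc a b) ∧
    (1 : ℝ) ∈ verticalCut S 0

/-- Basic facts extracted from membership in `Ω''`. -/
lemma memOmegaPP_facts {S : Set (ℝ × ℝ)} (h : MemOmegaPP S) :
    IsClosed S ∧ (∀ p ∈ S, 0 ≤ p.1 ∧ p.1 ≤ 1 ∧ 0 ≤ p.2) ∧
      ∃ M : ℝ, ∀ p ∈ S, p.1 < 1 → p.2 ≤ M := by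
  obtain ⟨A, hAc, hAb, hAsub, rfl⟩ := h
  refine ⟨hAc.union (isClosed_singleton.prod isClosed_Ici), ?_, ?_⟩
  · rintro p (hp | hp)
    · have := hAsub hp
      exact ⟨this.1.1, this.1.2, this.2⟩
    · obtain ⟨h1, h2⟩ := hp
      rw [mem_singleton_iff] at h1
      exact ⟨by rw [h1]; norm_num, by rw [h1], h2⟩
  · obtain ⟨M, hM⟩ := hAb.exists_norm_le
    refine ⟨M, ?_⟩
    rintro p (hp | hp) hp1
    · exact le_trans (le_trans (le_abs_self _) (norm_snd_le p)) (hM p hp)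
    · rw [mem_singleton_iff.1 hp.1] at hp1; linarith
  
/-- Intermediate value theorem for sets with nonempty interval cuts. -/
lemma ivt_core {S : Set (ℝ × ℝ)} {M c l h : ℝ}
    (hS : IsClosed S)
    (hcut : ∀ r ∈ Ico (0:ℝ) 1, ∃ a b : ℝ, a ≤ b ∧ verticalCut S r = Icc a b)
    (hpos : ∀ p ∈ S, 0 ≤ p.2)
    (hM : ∀ p ∈ S, p.1 < 1 → p.2 ≤ M)
    (hl : 0 ≤ l) (hh : h < 1) (hlh : l ≤ h)
    {x₁ x₂ y₁ y₂ : ℝ} (hx₁ : x₁ ∈ Icc l h) (hx₂ : x₂ ∈ Icc l h)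
    (h₁ : (x₁, y₁) ∈ S) (h₂ : (x₂, y₂) ∈ S) (hy₁ : y₁ ≤ c) (hy₂ : c ≤ y₂) :
    ∃ v ∈ Icc l h, (v, c) ∈ S := by
  have hIco : ∀ r ∈ Icc l h, r ∈ Ico (0:ℝ) 1 := fun r hr =>
    ⟨le_trans hl hr.1, lt_of_le_of_lt hr.2 hh⟩
  set T₁ : Set ℝ := Prod.fst '' (S ∩ Icc l h ×ˢ Icc 0 c) with hT₁def
  set T₂ : Set ℝ := Prod.fst '' (S ∩ Icc l h ×ˢ Icc c M) with hT₂def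
  have hT₁c : IsClosed T₁ :=
    (((isCompact_Icc.prod isCompact_Icc).inter_left hS).image continuous_fst).isClosed
  have hT₂c : IsClosed T₂ :=
    (((isCompact_Icc.prod isCompact_Icc).inter_left hS).image continuous_fst).isClosed
  have hmem₁ : x₁ ∈ T₁ := ⟨(x₁, y₁), ⟨h₁, hx₁, hpos _ h₁, hy₁⟩, rfl⟩
  have hmem₂ : x₂ ∈ T₂ :=
    ⟨(x₂, y₂), ⟨h₂, hx₂, hy₂, hM _ h₂ (lt_of_le_of_lt hx₂.2 hh)⟩, rfl⟩
  -- every point of `Icc l h` is in `T₁ ∪ T₂`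
  have hcover : ∀ r ∈ Icc l h, r ∈ T₁ ∪ T₂ := by
    intro r hr
    obtain ⟨a, b, hab, hcuteq⟩ := hcut r (hIco r hr)
    have ha : (r, a) ∈ S := by
      have : a ∈ verticalCut S r := by rw [hcuteq]; exact ⟨le_refl a, hab⟩
      exact this
    rcases le_total a c with hac | hac
    · exact Or.inl ⟨(r, a), ⟨ha, hr, hpos _ ha, hac⟩, rfl⟩
    · exact Or.inr ⟨(r, a), ⟨ha, hr, hac, hM _ ha (hIco r hr).2⟩, rfl⟩
  -- a point in `T₁ ∩ T₂` gives the conclusion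
  have hkey : ∀ r ∈ Icc l h, r ∈ T₁ → r ∈ T₂ → (r, c) ∈ S := by
    rintro r hr ⟨p, ⟨hpS, _, hpc⟩, hp1⟩ ⟨q, ⟨hqS, _, hqc⟩, hq1⟩
    obtain ⟨a, b, hab, hcuteq⟩ := hcut r (hIco r hr)
    have hpcut : p.2 ∈ verticalCut S r := by
      show (r, p.2) ∈ S; rw [← hp1]; exact hpS
    have hqcut : q.2 ∈ verticalCut S r := by
      show (r, q.2) ∈ S; rw [← hq1]; exact hqS
    rw [hcuteq] at hpcut hqcut
    have : c ∈ verticalCut S r := by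
      rw [hcuteq]
      exact ⟨le_trans hpcut.1 hpc.2, le_trans hqc.1 hqcut.2⟩
    exact this
  by_cases hne : ∃ r ∈ Icc l h, r ∈ T₁ ∩ T₂
  · obtain ⟨r, hr, hr1, hr2⟩ := hne
    exact ⟨r, hr, hkey r hr hr1 hr2⟩
  · exfalso
    push_neg at hne
    have hcov' : Icc l h ⊆ T₂ᶜ ∪ T₁ᶜ := by
      intro r hr
      rcases hcover r hr with h1 | h2
      · exact Or.inl fun h2 => hne r hr ⟨h1, h2⟩
      · exact Or.inr fun h1 => hne r hr ⟨h1, h2⟩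
    have hne1 : (Icc l h ∩ T₂ᶜ).Nonempty :=
      ⟨x₁, hx₁, fun h2 => hne x₁ hx₁ ⟨hmem₁, h2⟩⟩
    have hne2 : (Icc l h ∩ T₁ᶜ).Nonempty :=
      ⟨x₂, hx₂, fun h1 => hne x₂ hx₂ ⟨h1, hmem₂⟩⟩
    obtain ⟨r, hr, hr2, hr1⟩ :=
      isPreconnected_Icc _ _ hT₂c.isOpen_compl hT₁c.isOpen_compl hcov' hne1 hne2
    rcases hcover r hr with h1 | h2
    · exact hr1 h1
    · exact hr2 h2

/-- `Ω'` is closed in `Ω''` with respect to the Hausdorff metric (the metric on `ℝ × ℝ` is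
the `ℓ∞` product metric): if `Aₙ ∈ Ω'` converge in Hausdorff distance to `B ∈ Ω''`,
then `B ∈ Ω'`. -/
theorem omegaP_closed (A : ℕ → Set (ℝ × ℝ)) (B : Set (ℝ × ℝ))
    (hA : ∀ n, MemOmegaP (A n)) (hB : MemOmegaPP B)
    (hconv : Filter.Tendsto (fun n => EMetric.hausdorffEdist (A n) B)
      Filter.atTop (nhds 0)) :
    MemOmegaP B := by
  obtain ⟨hBclosed, hBdom, M, hM⟩ := memOmegaPP_facts hB
  have hsmall : ∀ ε : ℝ, 0 < ε →
      ∃ n, EMetric.hausdorffEdist (A n) B < ENNReal.ofReal ε := by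
    intro ε hε
    exact (hconv.eventually_lt_const (ENNReal.ofReal_pos.mpr hε)).exists
  -- transferring points from `A n` to `B`
  have htoB : ∀ n (p : ℝ × ℝ), p ∈ A n →
      ∀ ε : ℝ, EMetric.hausdorffEdist (A n) B < ENNReal.ofReal ε →
      ∃ w ∈ B, dist p w < ε := by
    intro n p hp ε hd
    obtain ⟨w, hw, hwd⟩ := EMetric.exists_edist_lt_of_hausdorffEdist_lt hp hd
    exact ⟨w, hw, edist_lt_ofReal.1 hwd⟩
  have htoA : ∀ n (p : ℝ × ℝ), p ∈ B →
      ∀ ε : ℝ, EMetric.hausdorffEdist (A n) B < ENNReal.ofReal ε →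
      ∃ w ∈ A n, dist p w < ε := by
    intro n p hp ε hd
    rw [EMetric.hausdorffEdist, EMetric.hausdorffEdist_comm] at hd
    obtain ⟨w, hw, hwd⟩ := EMetric.exists_edist_lt_of_hausdorffEdist_lt hp hd
    exact ⟨w, hw, edist_lt_ofReal.1 hwd⟩
  refine ⟨hB, ?_, ?_⟩
  · -- cuts of `B` are nonempty closed intervals
    intro t ht
    set I : Set ℝ := verticalCut B t with hIdef
    have hIclosed : IsClosed I := hBclosed.preimage (Continuous.prodMk_right t)
    have hIbdd : I ⊆ Icc 0 M := fun y hy =>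
      ⟨(hBdom _ hy).2.2, hM (t, y) hy ht.2⟩
    -- nonemptiness of the cut
    have hIne : I.Nonempty := by
      set C : Set (ℝ × ℝ) := B ∩ Icc (0:ℝ) 1 ×ˢ Icc (0:ℝ) M with hCdef
      set W : Set ℝ := Prod.fst '' C with hWdef
      have hWclosed : IsClosed W :=
        (((isCompact_Icc.prod isCompact_Icc).inter_left hBclosed).image
          continuous_fst).isClosed
      have htW : t ∈ W := by
        rw [← hWclosed.closure_eq]
        rw [Metric.mem_closure_iff]
        intro ε hε
        have hε' : 0 < min ε (1 - t) := lt_min hε (by linarith [ht.2])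
        obtain ⟨n, hn⟩ := hsmall _ hε'
        obtain ⟨a₀, b₀, hab, hcuteq⟩ := (hA n).2.1 t ht
        have ha₀ : (t, a₀) ∈ A n := by
          have : a₀ ∈ verticalCut (A n) t := by rw [hcuteq]; exact ⟨le_refl _, hab⟩
          exact this
        obtain ⟨w, hw, hwd⟩ := htoB n _ ha₀ _ hn
        have hd0 : dist t w.1 ≤ dist ((t, a₀) : ℝ × ℝ) w := by
          rw [Prod.dist_eq]; exact le_max_left _ _
        have hd1 : dist t w.1 < min ε (1 - t) := lt_of_le_of_lt hd0 hwd
        have hw1 : w.1 < 1 := by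
          rw [Real.dist_eq] at hd1
          have := (abs_sub_lt_iff.1 (lt_of_lt_of_le hd1 (min_le_right _ _))).2
          linarith
        refine ⟨w.1, ⟨w, ⟨hw, ⟨(hBdom _ hw).1, (hBdom _ hw).2.1⟩,
          (hBdom _ hw).2.2, hM w hw hw1⟩, rfl⟩, lt_of_lt_of_le hd1 (min_le_left _ _)⟩
      obtain ⟨p, ⟨hpB, _⟩, hp1⟩ := htW
      refine ⟨p.2, ?_⟩
      show (t, p.2) ∈ B
      rw [← hp1]; exact hpB
    -- order-convexity of the cut
    have hIconv : ∀ y₁ ∈ I, ∀ y₂ ∈ I, ∀ c : ℝ, y₁ ≤ c → c ≤ y₂ → c ∈ I := by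
      intro y₁ hy₁ y₂ hy₂ c hc1 hc2
      rcases eq_or_lt_of_le hc1 with rfl | hc1'
      · exact hy₁
      rcases eq_or_lt_of_le hc2 with rfl | hc2'
      · exact hy₂
      show (t, c) ∈ B
      rw [← hBclosed.closure_eq, Metric.mem_closure_iff]
      intro ε hε
      set ε' : ℝ := min (ε/2) (min ((1-t)/2) (min (c - y₁) (y₂ - c))) with hε'def
      have hε'pos : 0 < ε' := by
        refine lt_min (by linarith) (lt_min (by linarith [ht.2]) (lt_min ?_ ?_)) <;>
          linarith
      obtain ⟨n, hn⟩ := hsmall _ hε'pos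
      obtain ⟨hAnclosed, hAndom, Mn, hMn⟩ := memOmegaPP_facts (hA n).1
      obtain ⟨p, hp, hpd⟩ := htoA n _ hy₁ _ hn
      obtain ⟨q, hq, hqd⟩ := htoA n _ hy₂ _ hn
      rw [Prod.dist_eq] at hpd hqd
      have hpd1 : |t - p.1| < ε' :=
        lt_of_le_of_lt (le_trans (le_of_eq (Real.dist_eq t p.1).symm)
          (le_max_left _ _)) hpd
      have hpd2 : |y₁ - p.2| < ε' :=
        lt_of_le_of_lt (le_trans (le_of_eq (Real.dist_eq y₁ p.2).symm)
          (le_max_right _ _)) hpd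
      have hqd1 : |t - q.1| < ε' :=
        lt_of_le_of_lt (le_trans (le_of_eq (Real.dist_eq t q.1).symm)
          (le_max_left _ _)) hqd
      have hqd2 : |y₂ - q.2| < ε' :=
        lt_of_le_of_lt (le_trans (le_of_eq (Real.dist_eq y₂ q.2).symm)
          (le_max_right _ _)) hqd
      rw [abs_sub_lt_iff] at hpd1 hpd2 hqd1 hqd2
      have hε'1 : ε' ≤ (1 - t)/2 := le_trans (min_le_right _ _) (min_le_left _ _)
      have hε'2 : ε' ≤ c - y₁ :=
        le_trans (min_le_right _ _) (le_trans (min_le_right _ _) (min_le_left _ _))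
      have hε'3 : ε' ≤ y₂ - c :=
        le_trans (min_le_right _ _) (le_trans (min_le_right _ _) (min_le_right _ _))
      have hε'4 : ε' ≤ ε/2 := min_le_left _ _
      -- set up ivt_core
      have hp2c : p.2 ≤ c := by linarith [hpd2.2]
      have hq2c : c ≤ q.2 := by linarith [hqd2.1]
      have hl0 : 0 ≤ min p.1 q.1 :=
        le_min (hAndom p hp).1 (hAndom q hq).1
      have hh1 : max p.1 q.1 < 1 := by
        rw [max_lt_iff]
        constructor <;> [linarith [hpd1.1]; linarith [hqd1.1]]
      obtain ⟨v, hv, hvc⟩ := ivt_core hAnclosed (hA n).2.1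
        (fun r hr => (hAndom r hr).2.2) hMn hl0 hh1 (min_le_max)
        (⟨min_le_left _ _, le_max_left _ _⟩ : p.1 ∈ Icc _ _)
        (⟨min_le_right _ _, le_max_right _ _⟩ : q.1 ∈ Icc _ _)
        (by rwa [Prod.mk.eta]) (by rwa [Prod.mk.eta]) hp2c hq2c
      obtain ⟨w, hw, hwd⟩ := htoB n _ hvc _ hn
      refine ⟨w, hw, ?_⟩
      have htv : |t - v| < ε' := by
        rw [abs_sub_lt_iff]
        constructor
        · calc t - v ≤ t - min p.1 q.1 := by linarith [hv.1]
            _ < ε' := by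
              rcases min_choice p.1 q.1 with hmin | hmin <;> rw [hmin]
              · linarith [hpd1.1]
              · linarith [hqd1.1]
        · calc v - t ≤ max p.1 q.1 - t := by linarith [hv.2]
            _ < ε' := by
              rcases max_choice p.1 q.1 with hmax | hmax <;> rw [hmax]
              · linarith [hpd1.2]
              · linarith [hqd1.2]
      have hdvc : dist ((t, c) : ℝ × ℝ) (v, c) ≤ ε' := by
        rw [Prod.dist_eq]
        simp only [dist_self]
        rw [max_eq_left dist_nonneg, Real.dist_eq]
        exact le_of_lt htv
      calc dist (t, c) w ≤ dist (t, c) (v, c) + dist (v, c) w := dist_triangle _ _ _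
        _ < ε' + ε' := add_lt_add_of_le_of_lt hdvc hwd
        _ ≤ ε := by linarith
    -- conclusion: the cut is `Icc (sInf I) (sSup I)`
    have hIcpt : IsCompact I :=
      Metric.isCompact_of_isClosed_isBounded hIclosed
        ((Metric.isBounded_Icc 0 M).subset hIbdd)
    refine ⟨sInf I, sSup I, ?_, ?_⟩
    · obtain ⟨y, hy⟩ := hIne
      exact le_trans (csInf_le hIcpt.bddBelow hy) (le_csSup hIcpt.bddAbove hy)
    · ext x
      constructor
      · intro hx
        exact ⟨csInf_le hIcpt.bddBelow hx, le_csSup hIcpt.bddAbove hx⟩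
      · intro hx
        exact hIconv _ (hIcpt.sInf_mem hIne) _ (hIcpt.sSup_mem hIne) x hx.1 hx.2
  · -- `(0,1) ∈ B`
    show ((0:ℝ), (1:ℝ)) ∈ B
    rw [← hBclosed.closure_eq, Metric.mem_closure_iff]
    intro ε hε
    obtain ⟨n, hn⟩ := hsmall ε hε
    exact htoB n _ ((hA n).2.2) _ hn
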